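/- (Theorem 2, KKT-based inference: half-space containment of the risk envelope.) Under the single-step setup, suppose each component of g : ℝ^m → ℝ^L is convex and differentiable, U = {u : u⁻(j) ≤ u(j) ≤ u⁺(j)} with u⁻(j) < u⁺(j) for all j, P is a nonempty compact convex subset of Δ^L, and u* ∈ U minimizes φ(u) = max_{q ∈ P} ⟨g(u), q⟩ over U. With J⁺ = {j : u*(j) = u⁺(j)} and J⁻ = {j : u*(j) = u⁻(j)}, define the feasible set F = {v ∈ Δ^L : ∂_j⟨g(u), v⟩|_{u*} ≤ 0 for j ∈ J⁺, ∂_j⟨g(u), v⟩|_{u*} ≥ 0 for j ∈ J⁻, ∂_j⟨g(u), v⟩|_{u*} = 0 for j ∉ J⁺ ∪ J⁻} and τ' = sup_{v ∈ F} ⟨g(u*), v⟩. Then F is nonempty, τ' is attained, φ(u*) ≤ τ', and every q ∈ P satisfies ⟨g(u*), q⟩ ≤ τ'. In other words, P ⊆ H ∩ Δ^L where H = {v ∈ ℝ^L : ⟨g(u*), v⟩ ≤ τ'}. -/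

import Mathlib

open Filter Topology

/-- Auxiliary: a continuous function on a nonempty compact set attains its supremum. -/
lemma rsirl_attain_aux {α : Type*} [TopologicalSpace α] {P : Set α} (hPne : P.Nonempty)
    (hPcomp : IsCompact P) {f : α → ℝ} (hf : Continuous f) :
    ∃ q ∈ P, (∀ p ∈ P, f p ≤ f q) ∧ sSup {x | ∃ p ∈ P, x = f p} = f q := by
  obtain ⟨q, hqP, hq⟩ := hPcomp.exists_isMaxOn hPne hf.continuousOn
  refine ⟨q, hqP, fun p hp => hq hp, ?_⟩
  apply IsGreatest.csSup_eq
  exact ⟨⟨q, hqP, rfl⟩, by rintro x ⟨p, hp, rfl⟩; exact hq hp⟩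

/-- Auxiliary: a uniform scaling factor bounded by positive margins. -/
lemma rsirl_exists_eps {m : ℕ} (γ c : Fin m → ℝ) (hγ : ∀ j, 0 < γ j) :
    ∃ ε > 0, ∀ j, ε * |c j| ≤ γ j := by
  by_cases hm : (Finset.univ : Finset (Fin m)).Nonempty
  · set ε := Finset.univ.inf' hm (fun j => γ j / (1 + |c j|)) with hε
    have hεpos : 0 < ε := by
      rw [hε, Finset.lt_inf'_iff]
      exact fun j _ => div_pos (hγ j) (by positivity)
    refine ⟨ε, hεpos, fun j => ?_⟩
    have h1 : ε ≤ γ j / (1 + |c j|) := Finset.inf'_le _ (Finset.mem_univ j)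
    have h2 : (0:ℝ) < 1 + |c j| := by positivity
    have h3 : ε * (1 + |c j|) ≤ γ j := by rw [← le_div_iff₀ h2]; exact h1
    nlinarith [abs_nonneg (c j)]
  · exact ⟨1, one_pos, fun j => absurd (Finset.mem_univ j) (fun h => hm ⟨j, h⟩)⟩

set_option maxHeartbeats 1000000

/-- (Theorem 2 of the paper, KKT-based inference.) In the single-step
setting, the KKT relaxation solved over the simplex yields a half-space containing the
true risk envelope: with `F` the set of `v ∈ Δ^L` satisfying the stationarity constraints
at the optimal demonstration `u*`, and `τ' = sup_{v ∈ F} ⟨g u*, v⟩`, the set `F` is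
nonempty, `τ'` is attained, `φ(u*) ≤ τ'`, and `⟨g u*, q⟩ ≤ τ'` for every `q ∈ P`;
i.e. `P ⊆ H ∩ Δ^L` with `H = {v | ⟨g u*, v⟩ ≤ τ'}`. -/
theorem kkt_inference_halfspace
    (L m : ℕ) (g : (Fin m → ℝ) → Fin L → ℝ)
    (hgconv : ∀ j : Fin L, ConvexOn ℝ Set.univ (fun u => g u j))
    (hgdiff : ∀ j : Fin L, Differentiable ℝ (fun u => g u j))
    (ulo uhi : Fin m → ℝ) (hbox : ∀ j, ulo j < uhi j)
    (U : Set (Fin m → ℝ)) (hU : U = {u | ∀ j, ulo j ≤ u j ∧ u j ≤ uhi j})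
    (P : Set (Fin L → ℝ)) (hPne : P.Nonempty) (hPcomp : IsCompact P)
    (hPconv : Convex ℝ P) (hPsub : P ⊆ stdSimplex ℝ (Fin L))
    (φ : (Fin m → ℝ) → ℝ)
    (hφ : ∀ u, φ u = sSup {x : ℝ | ∃ q ∈ P, x = ∑ i, g u i * q i})
    (ustar : Fin m → ℝ) (hustar : ustar ∈ U)
    (hopt : ∀ u ∈ U, φ ustar ≤ φ u)
    (F : Set (Fin L → ℝ))
    (hF : F = {v ∈ stdSimplex ℝ (Fin L) |
      (∀ j : Fin m, ustar j = uhi j →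
        fderiv ℝ (fun u => ∑ i, g u i * v i) ustar (Pi.single j 1) ≤ 0) ∧
      (∀ j : Fin m, ustar j = ulo j →
        0 ≤ fderiv ℝ (fun u => ∑ i, g u i * v i) ustar (Pi.single j 1)) ∧
      (∀ j : Fin m, ustar j ≠ uhi j → ustar j ≠ ulo j →
        fderiv ℝ (fun u => ∑ i, g u i * v i) ustar (Pi.single j 1) = 0)})
    (τ' : ℝ) (hτ' : τ' = sSup {x : ℝ | ∃ v ∈ F, x = ∑ i, g ustar i * v i}) :
    F.Nonempty ∧
    (∃ v ∈ F, ∑ i, g ustar i * v i = τ') ∧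
    φ ustar ≤ τ' ∧
    (∀ q ∈ P, ∑ i, g ustar i * q i ≤ τ') := by
  classical
  have hustar' : ∀ j, ulo j ≤ ustar j ∧ ustar j ≤ uhi j := by rw [hU] at hustar; exact hustar
  -- derivatives of the components of g at ustar
  set D : Fin L → (Fin m → ℝ) →L[ℝ] ℝ := fun i => fderiv ℝ (fun u => g u i) ustar with hDdef
  have hDg : ∀ i, HasFDerivAt (fun u => g u i) (D i) ustar := fun i => (hgdiff i ustar).hasFDerivAt
  -- fderiv of the pairing
  have hfd : ∀ (v w : Fin L → ℝ) (w' : Fin m → ℝ),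
      fderiv ℝ (fun u => ∑ i, g u i * v i) ustar w' = ∑ i, v i * D i w' := by
    intro v _ w'
    have hsum : HasFDerivAt (fun u => ∑ i, g u i * v i) (∑ i, v i • D i) ustar :=
      HasFDerivAt.fun_sum (fun i _ => (hDg i).mul_const (v i))
    rw [hsum.fderiv]
    simp [ContinuousLinearMap.sum_apply, mul_comm]
  -- the linear map  v ↦ (∑_i v i * D i (e_j))_j
  set aL : (Fin L → ℝ) →ₗ[ℝ] (Fin m → ℝ) :=
    { toFun := fun v j => ∑ i, v i * D i (Pi.single j 1)
      map_add' := fun x y => by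
        funext j; simp [add_mul, Finset.sum_add_distrib]
      map_smul' := fun c x => by
        funext j; simp [Finset.mul_sum, mul_assoc] } with haLdef
  have haL : ∀ (v : Fin L → ℝ) (j : Fin m), aL v j = ∑ i, v i * D i (Pi.single j 1) :=
    fun v j => rfl
  have haLfd : ∀ (v : Fin L → ℝ) (j : Fin m),
      fderiv ℝ (fun u => ∑ i, g u i * v i) ustar (Pi.single j 1) = aL v j :=
    fun v j => hfd v v (Pi.single j 1)
  -- continuity of the pairing in q
  have hcont : ∀ u : Fin m → ℝ, Continuous fun q : Fin L → ℝ => ∑ i, g u i * q i :=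
    fun u => continuous_finset_sum _ fun i _ => continuous_const.mul (continuous_apply i)
  -- maximizers of the pairing over P
  have hmax : ∀ u : Fin m → ℝ, ∃ q ∈ P, (∀ p ∈ P, ∑ i, g u i * p i ≤ ∑ i, g u i * q i)
      ∧ φ u = ∑ i, g u i * q i := by
    intro u
    obtain ⟨q, hqP, h1, h2⟩ := rsirl_attain_aux hPne hPcomp (hcont u)
    exact ⟨q, hqP, h1, by rw [hφ u]; exact h2⟩
  have hub : ∀ u : Fin m → ℝ, ∀ p ∈ P, ∑ i, g u i * p i ≤ φ u := by
    intro u p hp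
    obtain ⟨q, hqP, h1, h2⟩ := hmax u
    rw [h2]; exact h1 p hp
  -- the argmax set and the constraint cone
  set Qstar : Set (Fin L → ℝ) := {q | q ∈ P ∧ ∑ i, g ustar i * q i = φ ustar} with hQdef
  set K : Set (Fin m → ℝ) := {w | ∀ j, (ustar j = uhi j → w j ≤ 0) ∧
      (ustar j = ulo j → 0 ≤ w j) ∧
      (ustar j ≠ uhi j → ustar j ≠ ulo j → w j = 0)} with hKdef
  have hKclosed : IsClosed K := by
    have hKeq : K = ⋂ j, (({w : Fin m → ℝ | ustar j = uhi j → w j ≤ 0} ∩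
        {w | ustar j = ulo j → 0 ≤ w j}) ∩
        {w | ustar j ≠ uhi j → ustar j ≠ ulo j → w j = 0}) := by
      ext w
      simp only [hKdef, Set.mem_setOf_eq, Set.mem_iInter, Set.mem_inter_iff]
      constructor
      · intro h j; exact ⟨⟨(h j).1, (h j).2.1⟩, (h j).2.2⟩
      · intro h j; exact ⟨(h j).1.1, (h j).1.2, (h j).2⟩
    rw [hKeq]
    refine isClosed_iInter fun j => IsClosed.inter (IsClosed.inter ?_ ?_) ?_
    · by_cases hp : ustar j = uhi j
      · simpa [hp] using isClosed_le (continuous_apply j) continuous_const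
      · simp [hp]
    · by_cases hp : ustar j = ulo j
      · simpa [hp] using isClosed_le continuous_const (continuous_apply j)
      · simp [hp]
    · by_cases hp : ustar j ≠ uhi j
      · by_cases hq : ustar j ≠ ulo j
        · simpa [hp, hq] using isClosed_eq (continuous_apply j) continuous_const
        · simp [hq]
      · simp [hp]
  have hKconv : Convex ℝ K := by
    intro x hx y hy a b ha hb hab j
    obtain ⟨h1, h2, h3⟩ := hx j
    obtain ⟨h1', h2', h3'⟩ := hy j
    refine ⟨fun h => ?_, fun h => ?_, fun h h' => ?_⟩ <;>
      simp only [Pi.add_apply, Pi.smul_apply, smul_eq_mul]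
    · nlinarith [h1 h, h1' h]
    · nlinarith [h2 h, h2' h]
    · rw [h3 h h', h3' h h', mul_zero, mul_zero, add_zero]
  -- the key KKT existence result
  have hKey : ∃ q ∈ Qstar, aL q ∈ K := by
    by_contra hcon
    push_neg at hcon
    -- Qstar is nonempty, convex, compact
    have hQne : Qstar.Nonempty := by
      obtain ⟨q, hqP, _, h2⟩ := hmax ustar
      exact ⟨q, hqP, h2.symm⟩
    have hQconv : Convex ℝ Qstar := by
      intro q1 hq1 q2 hq2 a b ha hb hab
      refine ⟨hPconv hq1.1 hq2.1 ha hb hab, ?_⟩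
      have hexp : ∑ i, g ustar i * (a • q1 + b • q2) i
          = a * (∑ i, g ustar i * q1 i) + b * (∑ i, g ustar i * q2 i) := by
        rw [Finset.mul_sum, Finset.mul_sum, ← Finset.sum_add_distrib]
        refine Finset.sum_congr rfl fun i _ => ?_
        simp only [Pi.add_apply, Pi.smul_apply, smul_eq_mul]; ring
      rw [hexp, hq1.2, hq2.2]
      ring_nf
      linear_combination (φ ustar) * hab
    have hQcomp : IsCompact Qstar := by
      have : Qstar = P ∩ ((fun q => ∑ i, g ustar i * q i) ⁻¹' {φ ustar}) := rfl
      rw [this]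
      exact hPcomp.inter_right (isClosed_singleton.preimage (hcont ustar))
    have haLcont : Continuous aL := aL.continuous_of_finiteDimensional
    have hAconv : Convex ℝ (aL '' Qstar) := hQconv.linear_image aL
    have hAcomp : IsCompact (aL '' Qstar) := hQcomp.image haLcont
    have hdisj : Disjoint (aL '' Qstar) K := by
      rw [Set.disjoint_left]
      rintro x ⟨q, hq, rfl⟩
      exact hcon q hq
    obtain ⟨f, s, t, hfA, hst, hfK⟩ :=
      geometric_hahn_banach_compact_closed hAconv hAcomp hKconv hKclosed hdisj
    have h0K : (0 : Fin m → ℝ) ∈ K := by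
      intro j
      exact ⟨fun _ => le_refl 0, fun _ => le_refl 0, fun _ _ => rfl⟩
    have ht0 : t < 0 := by
      have := hfK 0 h0K
      rwa [map_zero] at this
    -- f is nonnegative on the cone K
    have hfK0 : ∀ w ∈ K, 0 ≤ f w := by
      intro w hw
      by_contra hneg
      push_neg at hneg
      have hrK : ∀ r : ℝ, 0 ≤ r → r • w ∈ K := by
        intro r hr j
        obtain ⟨h1, h2, h3⟩ := hw j
        refine ⟨fun h => ?_, fun h => ?_, fun h h' => ?_⟩ <;>
          simp only [Pi.smul_apply, smul_eq_mul]
        · exact mul_nonpos_of_nonneg_of_nonpos hr (h1 h)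
        · exact mul_nonneg hr (h2 h)
        · rw [h3 h h', mul_zero]
      have hrpos : 0 ≤ t / f w + 1 := by
        have : 0 < t / f w := div_pos_of_neg_of_neg ht0 hneg
        linarith
      have hlt := hfK _ (hrK _ hrpos)
      rw [map_smul, smul_eq_mul] at hlt
      have hfw : f w ≠ 0 := ne_of_lt hneg
      have heq : (t / f w + 1) * f w = t + f w := by
        field_simp
      rw [heq] at hlt
      linarith
    -- coordinates of f
    set c : Fin m → ℝ := fun j => f (Pi.single j 1) with hcdef
    have hfc : ∀ w : Fin m → ℝ, f w = ∑ j, w j * c j := by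
      intro w
      have h : f (∑ j, Pi.single j (w j)) = f w := by rw [Finset.univ_sum_single]
      rw [← h, map_sum]
      refine Finset.sum_congr rfl fun j _ => ?_
      have hs : Pi.single j (w j) = w j • (Pi.single j 1 : Fin m → ℝ) := by
        ext k; by_cases hk : k = j <;> simp [Pi.single_apply, hk]
      rw [hs, map_smul, smul_eq_mul]
    -- helper to build elements of K supported on one coordinate
    have hmemK : ∀ (j : Fin m) (x : ℝ), (ustar j = uhi j → x ≤ 0) →
        (ustar j = ulo j → 0 ≤ x) → (ustar j ≠ uhi j → ustar j ≠ ulo j → x = 0) →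
        (Pi.single j x : Fin m → ℝ) ∈ K := by
      intro j x hA hB hC j'
      by_cases hj : j' = j
      · subst hj
        simpa [Pi.single_eq_same] using ⟨hA, hB, hC⟩
      · refine ⟨fun _ => ?_, fun _ => ?_, fun _ _ => ?_⟩ <;>
          simp [Pi.single_eq_of_ne hj]
    -- sign conditions on c
    have hc1 : ∀ j, ustar j = uhi j → c j ≤ 0 := by
      intro j h
      have hne : ustar j ≠ ulo j := by
        intro h'; exact absurd (h'.symm.trans h) (ne_of_lt (hbox j))
      have hmem : (Pi.single j (-1 : ℝ) : Fin m → ℝ) ∈ K :=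
        hmemK j (-1) (fun _ => by norm_num) (fun h' => absurd h' hne)
          (fun h' _ => absurd h h')
      have h0 := hfK0 _ hmem
      have hsingle : (Pi.single j (-1 : ℝ) : Fin m → ℝ)
          = (-1 : ℝ) • (Pi.single j 1 : Fin m → ℝ) := by
        ext k; by_cases hk : k = j <;> simp [Pi.single_apply, hk]
      rw [hsingle, map_smul, smul_eq_mul] at h0
      simpa [hcdef] using by linarith [h0]
    have hc2 : ∀ j, ustar j = ulo j → 0 ≤ c j := by
      intro j h
      have hne : ustar j ≠ uhi j := by
        intro h'; exact absurd (h.symm.trans h') (ne_of_lt (hbox j))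
      have hmem : (Pi.single j (1 : ℝ) : Fin m → ℝ) ∈ K :=
        hmemK j 1 (fun h' => absurd h' hne) (fun _ => by norm_num)
          (fun _ h' => absurd h h')
      exact hfK0 _ hmem
    -- a uniform step size keeping ustar + s • c inside the box U
    have hfeas : ∃ ε > 0, ∀ s : ℝ, 0 ≤ s → s ≤ ε → ustar + s • c ∈ U := by
      have hγpos : ∀ j, 0 < (if ustar j = uhi j ∨ ustar j = ulo j then uhi j - ulo j
          else min (uhi j - ustar j) (ustar j - ulo j)) := by
        intro j
        by_cases hcase : ustar j = uhi j ∨ ustar j = ulo j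
        · rw [if_pos hcase]; exact sub_pos.2 (hbox j)
        · rw [if_neg hcase]
          push_neg at hcase
          exact lt_min (sub_pos.2 ((hustar' j).2.lt_of_ne hcase.1))
            (sub_pos.2 ((hustar' j).1.lt_of_ne (Ne.symm hcase.2)))
      obtain ⟨ε, hεpos, hεle⟩ := rsirl_exists_eps _ c hγpos
      refine ⟨ε, hεpos, fun s hs hsε => ?_⟩
      rw [hU]
      intro j
      have habs : |s * c j| ≤ (if ustar j = uhi j ∨ ustar j = ulo j then uhi j - ulo j
          else min (uhi j - ustar j) (ustar j - ulo j)) := by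
        rw [abs_mul, abs_of_nonneg hs]
        calc s * |c j| ≤ ε * |c j| := by nlinarith [abs_nonneg (c j)]
          _ ≤ _ := hεle j
      obtain ⟨hlo, hhi⟩ := abs_le.1 habs
      simp only [Pi.add_apply, Pi.smul_apply, smul_eq_mul]
      by_cases h1 : ustar j = uhi j
      · have hcneg : c j ≤ 0 := hc1 j h1
        have hγval : (if ustar j = uhi j ∨ ustar j = ulo j then uhi j - ulo j
            else min (uhi j - ustar j) (ustar j - ulo j)) = uhi j - ulo j := if_pos (Or.inl h1)
        constructor
        · rw [hγval] at hlo; linarith [h1 ▸ hlo]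
        · nlinarith [(hustar' j).2]
      · by_cases h2 : ustar j = ulo j
        · have hcpos : 0 ≤ c j := hc2 j h2
          have hγval : (if ustar j = uhi j ∨ ustar j = ulo j then uhi j - ulo j
              else min (uhi j - ustar j) (ustar j - ulo j)) = uhi j - ulo j := if_pos (Or.inr h2)
          constructor
          · nlinarith [(hustar' j).1]
          · rw [hγval] at hhi; linarith [h2 ▸ hhi]
        · have hγval : (if ustar j = uhi j ∨ ustar j = ulo j then uhi j - ulo j
              else min (uhi j - ustar j) (ustar j - ulo j))
              = min (uhi j - ustar j) (ustar j - ulo j) := if_neg (by push_neg; exact ⟨h1, h2⟩)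
          rw [hγval] at hlo hhi
          constructor
          · linarith [min_le_right (uhi j - ustar j) (ustar j - ulo j)]
          · linarith [min_le_left (uhi j - ustar j) (ustar j - ulo j)]
    obtain ⟨ε, hεpos, hεfeas⟩ := hfeas
    -- the sequence of perturbed points and their maximizers
    set t' : ℕ → ℝ := fun n => ε / (n + 1) with ht'def
    have ht'pos : ∀ n, 0 < t' n := fun n => div_pos hεpos (by positivity)
    have ht'le : ∀ n, t' n ≤ ε := by
      intro n
      rw [ht'def]
      apply div_le_self hεpos.le
      have : (0:ℝ) ≤ (n:ℝ) := Nat.cast_nonneg n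
      linarith
    have ht'0 : Tendsto t' atTop (𝓝 0) := by
      have h1 := tendsto_one_div_add_atTop_nhds_zero_nat.const_mul ε
      simpa [ht'def, div_eq_mul_inv, one_div] using h1
    set un : ℕ → Fin m → ℝ := fun n => ustar + t' n • c with hundef
    have hUn : ∀ n, un n ∈ U := fun n => hεfeas (t' n) (ht'pos n).le (ht'le n)
    choose qn hqnP hqnmax hqnval using fun n => hmax (un n)
    -- per-step inequality
    have hineq : ∀ n, 0 ≤ ∑ i, qn n i * ((g (un n) i - g ustar i) / t' n) := by
      intro n
      have h1 : φ ustar ≤ φ (un n) := hopt (un n) (hUn n)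
      have h2 : ∑ i, g ustar i * qn n i ≤ φ ustar := hub ustar (qn n) (hqnP n)
      have h3 : ∑ i, g ustar i * qn n i ≤ ∑ i, g (un n) i * qn n i := by
        rw [← hqnval n]; linarith
      have hexp : ∑ i, qn n i * ((g (un n) i - g ustar i) / t' n)
          = ((∑ i, g (un n) i * qn n i) - ∑ i, g ustar i * qn n i) / t' n := by
        rw [← Finset.sum_sub_distrib, Finset.sum_div]
        exact Finset.sum_congr rfl fun i _ => by ring
      rw [hexp]
      exact div_nonneg (by linarith) (ht'pos n).le
    -- extract a convergent subsequence of maximizers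
    obtain ⟨q0, hq0P, ψ, hψ, hψtend⟩ := hPcomp.tendsto_subseq hqnP
    have hqt : ∀ i, Tendsto (fun n => qn (ψ n) i) atTop (𝓝 (q0 i)) :=
      fun i => tendsto_pi_nhds.1 hψtend i
    have htψ : Tendsto (fun n => t' (ψ n)) atTop (𝓝[≠] 0) := by
      apply tendsto_nhdsWithin_of_tendsto_nhds_of_eventually_within
      · exact ht'0.comp hψ.tendsto_atTop
      · exact Eventually.of_forall fun n => (ht'pos _).ne'
    -- directional derivative along c
    have hline : HasDerivAt (fun s : ℝ => ustar + s • c) c 0 := by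
      have h1 : HasDerivAt (fun s : ℝ => s • c) ((1:ℝ) • c) 0 := (hasDerivAt_id 0).smul_const c
      simpa using h1.const_add ustar
    have hgd : ∀ i, HasDerivAt (fun s : ℝ => g (ustar + s • c) i) (D i c) 0 := by
      intro i
      have hf : HasFDerivAt (fun u => g u i) (D i) (ustar + (0:ℝ) • c) := by
        simpa using hDg i
      exact hf.comp_hasDerivAt 0 hline
    have hslope : ∀ i, Tendsto (fun n => (g (un (ψ n)) i - g ustar i) / t' (ψ n))
        atTop (𝓝 (D i c)) := by
      intro i
      have h1 := (hasDerivAt_iff_tendsto_slope.1 (hgd i)).comp htψ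
      refine h1.congr fun n => ?_
      simp [hundef, Function.comp, slope_def_field]
    have hlim : Tendsto (fun n => ∑ i, qn (ψ n) i * ((g (un (ψ n)) i - g ustar i) / t' (ψ n)))
        atTop (𝓝 (∑ i, q0 i * D i c)) :=
      tendsto_finset_sum _ fun i _ => (hqt i).mul (hslope i)
    have hge : 0 ≤ ∑ i, q0 i * D i c := ge_of_tendsto' hlim (fun n => hineq (ψ n))
    -- the limit point is in Qstar
    have hun_tend : Tendsto (fun n => un (ψ n)) atTop (𝓝 ustar) := by
      have h1 : Tendsto (fun n => ustar + t' (ψ n) • c) atTop (𝓝 (ustar + (0:ℝ) • c)) :=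
        tendsto_const_nhds.add (((ht'0.comp hψ.tendsto_atTop)).smul tendsto_const_nhds)
      simpa [hundef] using h1
    have hval : Tendsto (fun n => ∑ i, g (un (ψ n)) i * qn (ψ n) i)
        atTop (𝓝 (∑ i, g ustar i * q0 i)) := by
      refine tendsto_finset_sum _ fun i _ => Tendsto.mul ?_ (hqt i)
      exact ((hgdiff i).continuous.continuousAt.tendsto.comp hun_tend)
    have hq0ge : φ ustar ≤ ∑ i, g ustar i * q0 i := by
      refine ge_of_tendsto' hval fun n => ?_
      rw [← hqnval (ψ n)]
      exact hopt _ (hUn (ψ n))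
    have hq0Q : q0 ∈ Qstar := ⟨hq0P, le_antisymm (hub ustar q0 hq0P) hq0ge⟩
    -- contradiction: f (aL q0) ≥ 0 but f < s < t < 0 on the image
    have hDc : ∀ i, D i c = ∑ j, c j * D i (Pi.single j 1) := by
      intro i
      have h1 : D i (∑ j, Pi.single j (c j)) = D i c := by rw [Finset.univ_sum_single]
      rw [← h1, map_sum]
      refine Finset.sum_congr rfl fun j _ => ?_
      have hs : Pi.single j (c j) = c j • (Pi.single j 1 : Fin m → ℝ) := by
        ext k; by_cases hk : k = j <;> simp [Pi.single_apply, hk]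
      rw [hs, map_smul, smul_eq_mul]
    have hfaL : f (aL q0) = ∑ i, q0 i * D i c := by
      rw [hfc]
      simp_rw [hDc, Finset.mul_sum]
      rw [Finset.sum_comm]
      refine Finset.sum_congr rfl fun j _ => ?_
      rw [haL, Finset.sum_mul]
      exact Finset.sum_congr rfl fun i _ => by ring
    have hlt := hfA (aL q0) ⟨q0, hq0Q, rfl⟩
    rw [hfaL] at hlt
    linarith
  -- unpack the KKT point
  obtain ⟨q0, hq0Q, hq0K⟩ := hKey
  have hq0F : q0 ∈ F := by
    rw [hF]
    refine ⟨hPsub hq0Q.1, fun j hj => ?_, fun j hj => ?_, fun j hj hj' => ?_⟩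
    · rw [haLfd]; exact (hq0K j).1 hj
    · rw [haLfd]; exact (hq0K j).2.1 hj
    · rw [haLfd]; exact (hq0K j).2.2 hj hj'
  -- F is compact
  have hFeq : F = stdSimplex ℝ (Fin L) ∩ aL ⁻¹' K := by
    rw [hF]
    ext v
    simp only [Set.mem_inter_iff, Set.mem_setOf_eq, Set.mem_preimage, hKdef]
    constructor
    · rintro ⟨hsim, h1, h2, h3⟩
      refine ⟨hsim, fun j => ⟨fun h => ?_, fun h => ?_, fun h h' => ?_⟩⟩
      · rw [← haLfd]; exact h1 j h
      · rw [← haLfd]; exact h2 j h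
      · rw [← haLfd]; exact h3 j h h'
    · rintro ⟨hsim, h⟩
      refine ⟨hsim, fun j hj => ?_, fun j hj => ?_, fun j hj hj' => ?_⟩
      · rw [haLfd]; exact (h j).1 hj
      · rw [haLfd]; exact (h j).2.1 hj
      · rw [haLfd]; exact (h j).2.2 hj hj'
  have hFcomp : IsCompact F := by
    rw [hFeq]
    exact (isCompact_stdSimplex ℝ (Fin L)).inter_right
      (hKclosed.preimage aL.continuous_of_finiteDimensional)
  obtain ⟨v0, hv0F, hmaxF, hsupF⟩ := rsirl_attain_aux ⟨q0, hq0F⟩ hFcomp (hcont ustar)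
  have hτ'eq : τ' = ∑ i, g ustar i * v0 i := by rw [hτ']; exact hsupF
  refine ⟨⟨q0, hq0F⟩, ⟨v0, hv0F, hτ'eq.symm⟩, ?_, ?_⟩
  · rw [hτ'eq, ← hq0Q.2]
    exact hmaxF q0 hq0F
  · intro q hq
    have h1 := hub ustar q hq
    have h2 : φ ustar ≤ τ' := by rw [hτ'eq, ← hq0Q.2]; exact hmaxF q0 hq0F
    linarith
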